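/- Let $p_{i-1}, p_i, p_{i+1}$ be points in the plane with $\|p_i - p_{i-1}\| \le 1$, $\|p_{i+1} - p_i\| \le 1$, and the angle at $p_i$ between the rays to $p_{i-1}$ and $p_{i+1}$ strictly greater than $\pi/3$. Then the distance from $p_i$ to the midpoint $m$ of $p_{i-1}$ and $p_{i+1}$ satisfies $\|p_i - m\| \le \frac{\sqrt{3}}{2}$. -/

import Mathlib

open Real EuclideanGeometry

theorem shorten_displacement (p q r : EuclideanSpace ℝ (Fin 2))
    (hpq : dist q p ≤ 1) (hqr : dist r q ≤ 1)
    (hangle : EuclideanGeometry.angle p q r > π/3) :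
    dist q (midpoint ℝ p r) ≤ Real.sqrt 3 / 2 := by
  set a := ‖q - p‖ with ha
  set b := ‖q - r‖ with hb
  have hda : dist q p = a := by rw [dist_eq_norm]
  have hdb : dist r q = b := by rw [dist_eq_norm, ← neg_sub, norm_neg]
  rw [hda] at hpq
  rw [hdb] at hqr
  have hcos : Real.cos (EuclideanGeometry.angle p q r) * (‖p - q‖ * ‖r - q‖)
      = inner ℝ (p - q) (r - q) := by
    exact InnerProductGeometry.cos_angle_mul_norm_mul_norm _ _
  have hcoslt : Real.cos (EuclideanGeometry.angle p q r) < 1/2 := by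
    have h1 : Real.cos (EuclideanGeometry.angle p q r) < Real.cos (π/3) := by
      apply Real.cos_lt_cos_of_nonneg_of_le_pi
      · positivity
      · exact EuclideanGeometry.angle_le_pi p q r
      · exact hangle
    rwa [Real.cos_pi_div_three] at h1
  have hinner : (inner ℝ (q - p) (q - r) : ℝ) ≤ 1/2 := by
    have hs : (inner ℝ (q - p) (q - r) : ℝ) = inner ℝ (p - q) (r - q) := by
      rw [← neg_sub p q, ← neg_sub r q, inner_neg_neg]
    rw [hs, ← hcos]
    have hna : ‖p - q‖ = a := by rw [← neg_sub, norm_neg]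
    have hnb : ‖r - q‖ = b := by rw [← neg_sub, norm_neg]
    rw [hna, hnb]
    have h0a : (0:ℝ) ≤ a := norm_nonneg _
    have h0b : (0:ℝ) ≤ b := norm_nonneg _
    nlinarith [hcoslt, h0a, h0b, mul_nonneg h0a h0b]
  have hsq : dist q (midpoint ℝ p r) ^ 2 ≤ 3/4 := by
    have hmid : q - midpoint ℝ p r = (2:ℝ)⁻¹ • ((q - p) + (q - r)) := by
      rw [midpoint_eq_smul_add, invOf_eq_inv]
      module
    have : dist q (midpoint ℝ p r) = ‖(2:ℝ)⁻¹ • ((q - p) + (q - r))‖ := by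
      rw [dist_eq_norm, hmid]
    rw [this, norm_smul]
    have hexp : ‖(q - p) + (q - r)‖ ^ 2
        = a ^ 2 + 2 * inner ℝ (q - p) (q - r) + b ^ 2 := by
      exact norm_add_sq_real _ _
    have h0a : (0:ℝ) ≤ a := norm_nonneg _
    have h0b : (0:ℝ) ≤ b := norm_nonneg _
    have hn : (0:ℝ) ≤ ‖(q - p) + (q - r)‖ := norm_nonneg _
    simp only [norm_inv, Real.norm_ofNat]
    nlinarith [hexp, hinner, hpq, hqr, h0a, h0b]
  have hs3 : Real.sqrt 3 ^ 2 = 3 := Real.sq_sqrt (by norm_num)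
  nlinarith [hsq, dist_nonneg (x := q) (y := midpoint ℝ p r), Real.sqrt_nonneg 3]
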